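/- arXiv:quant-ph/0508020 — 2 statements merged into one kernel-verified Lean document; each statement's English description precedes it below -/
import Mathlib

section
/- For i ≠ i′ and j ≠ j′, the matrix ρ(i,i′;j,j′) := ½ P[(|u_i w_j⟩ − |u_{i′} w_{j′}⟩)/√2] + ½ P[(|u_i w_{j′}⟩ − |u_{i′} w_j⟩)/√2] equals ½ P[|V_+⟩⊗|X_−⟩] + ½ P[|V_−⟩⊗|X_+⟩], where |V_±⟩ = (|u_i⟩ ± |u_{i′}⟩)/√2 and |X_±⟩ = (|w_j⟩ ± |w_{j′}⟩)/√2; in particular ρ(i,i′;j,j′) is separable on C^p ⊗ C^q. -/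
open Matrix Kronecker
open scoped BigOperators Classical ComplexOrder

noncomputable section

def grho {V : Type*} [Fintype V] [DecidableEq V] (G : SimpleGraph V) : Matrix V V ℂ :=
  ((2 * G.edgeFinset.card : ℂ))⁻¹ • G.lapMatrix ℂ

def degM {V : Type*} [Fintype V] [DecidableEq V] (G : SimpleGraph V) : Matrix V V ℂ :=
  Matrix.diagonal fun v => (G.degree v : ℂ)

def ptB {p q : ℕ} {α : Type*} (A : Matrix (Fin p × Fin q) (Fin p × Fin q) α) :
    Matrix (Fin p × Fin q) (Fin p × Fin q) α :=
  fun x y => A (x.1, y.2) (y.1, x.2)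

def gptB {p q : ℕ} (G : SimpleGraph (Fin p × Fin q)) : SimpleGraph (Fin p × Fin q) where
  Adj x y := G.Adj (x.1, y.2) (y.1, x.2)
  symm := ⟨fun x y h => G.adj_symm h⟩
  loopless := ⟨fun x h => G.irrefl h⟩

def IsDensityMatrix {n : Type*} [Fintype n] [DecidableEq n] (A : Matrix n n ℂ) : Prop :=
  A.PosSemidef ∧ A.trace = 1

def Separable {p q : ℕ} (ρ : Matrix (Fin p × Fin q) (Fin p × Fin q) ℂ) : Prop :=
  ∃ (m : ℕ) (w : Fin m → ℝ) (σ : Fin m → Matrix (Fin p) (Fin p) ℂ)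
    (τ : Fin m → Matrix (Fin q) (Fin q) ℂ),
    (∀ k, 0 ≤ w k) ∧ (∑ k, w k = 1) ∧
    (∀ k, IsDensityMatrix (σ k)) ∧ (∀ k, IsDensityMatrix (τ k)) ∧
    ρ = ∑ k, (w k : ℂ) • (σ k ⊗ₖ τ k)

def proj {n : Type*} (ψ : n → ℂ) : Matrix n n ℂ := vecMulVec ψ (star ψ)

lemma proj_smul {n : Type*} (c : ℂ) (ψ : n → ℂ) :
    proj (c • ψ) = (c * star c) • proj ψ := by
  ext a b; simp [proj, vecMulVec_apply]; ring

lemma proj_posSemidef {n : Type*} [Fintype n] [DecidableEq n] (ψ : n → ℂ) :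
    (proj ψ).PosSemidef := by
  rw [posSemidef_iff_dotProduct_mulVec]
  constructor
  · ext a b
    simp [proj, vecMulVec_apply, conjTranspose_apply, mul_comm]
  · intro x
    have h : star x ⬝ᵥ (proj ψ *ᵥ x) = star (star ψ ⬝ᵥ x) * (star ψ ⬝ᵥ x) := by
      simp only [proj, vecMulVec, mulVec, dotProduct, Matrix.of_apply, star_sum, star_mul',
        Pi.star_apply, star_star, Finset.sum_mul, Finset.mul_sum]
      rw [Finset.sum_comm]
      exact Finset.sum_congr rfl fun a _ => Finset.sum_congr rfl fun b _ => by ring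
    rw [h]
    exact star_mul_self_nonneg _

lemma proj_trace {n : Type*} [Fintype n] [DecidableEq n] (ψ : n → ℂ) :
    (proj ψ).trace = ∑ x, ψ x * star (ψ x) := by
  simp [proj, Matrix.trace, vecMulVec_apply, Matrix.diag]

lemma proj_prod {p q : ℕ} (f : Fin p → ℂ) (g : Fin q → ℂ) :
    proj (fun x : Fin p × Fin q => f x.1 * g x.2) = proj f ⊗ₖ proj g := by
  ext a b; simp [proj, vecMulVec_apply, kroneckerMap_apply, star_mul']; ring

lemma key {p q : ℕ} (f f' : Fin p → ℂ) (g g' : Fin q → ℂ) :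
    proj (fun x : Fin p × Fin q => f x.1 * g x.2 - f' x.1 * g' x.2) +
    proj (fun x : Fin p × Fin q => f x.1 * g' x.2 - f' x.1 * g x.2) =
    ((2 : ℂ)⁻¹) • (proj (fun x : Fin p × Fin q => (f x.1 + f' x.1) * (g x.2 - g' x.2)) +
      proj (fun x : Fin p × Fin q => (f x.1 - f' x.1) * (g x.2 + g' x.2))) := by
  ext a b
  simp [proj, vecMulVec_apply, star_sub, star_add, star_mul']
  ring

lemma single_prod {p q : ℕ} (i : Fin p) (j : Fin q) :
    (Pi.single (i, j) (1:ℂ) : Fin p × Fin q → ℂ)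
      = fun x => (Pi.single i (1:ℂ) : Fin p → ℂ) x.1 * (Pi.single j (1:ℂ) : Fin q → ℂ) x.2 := by
  ext x
  by_cases h1 : x.1 = i <;> by_cases h2 : x.2 = j <;>
    simp [Pi.single_apply, Prod.ext_iff, h1, h2]

lemma halfsq : ((Real.sqrt 2 : ℂ))⁻¹ * ((Real.sqrt 2 : ℂ))⁻¹ = 1/2 := by
  rw [← mul_inv, ← Complex.ofReal_mul, Real.mul_self_sqrt (by norm_num)]
  norm_num

lemma star_alpha : star ((Real.sqrt 2 : ℂ))⁻¹ = ((Real.sqrt 2 : ℂ))⁻¹ := by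
  simp [star_inv₀, Complex.star_def, Complex.conj_ofReal]

lemma trace_two {n : Type*} [Fintype n] [DecidableEq n] (i i' : n) (hi : i ≠ i') (s : ℂ)
    (hs : star s = s) (hs2 : s * s = 1) :
    ∑ x, ((Pi.single i (1:ℂ) : n → ℂ) x + s * (Pi.single i' (1:ℂ) : n → ℂ) x) *
      star ((Pi.single i (1:ℂ) : n → ℂ) x + s * (Pi.single i' (1:ℂ) : n → ℂ) x) = 2 := by
  have : ∀ x, ((Pi.single i (1:ℂ) : n → ℂ) x + s * (Pi.single i' (1:ℂ) : n → ℂ) x) *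
      star ((Pi.single i (1:ℂ) : n → ℂ) x + s * (Pi.single i' (1:ℂ) : n → ℂ) x)
      = (Pi.single i (1:ℂ) : n → ℂ) x + (Pi.single i' (1:ℂ) : n → ℂ) x := by
    intro x
    by_cases h1 : x = i <;> by_cases h2 : x = i' <;>
      simp_all [Pi.single_apply, hi]
  simp only [this]
  rw [Finset.sum_add_distrib]
  simp [Finset.sum_pi_single]
  norm_num

lemma dens_aux {n : Type*} [Fintype n] [DecidableEq n] (v : n → ℂ)
    (hv : ∑ x, v x * star (v x) = 2) :
    IsDensityMatrix (proj ((Real.sqrt 2 : ℂ)⁻¹ • v)) := by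
  refine ⟨proj_posSemidef _, ?_⟩
  rw [proj_smul, Matrix.trace_smul, proj_trace, hv, star_alpha, halfsq]
  norm_num

lemma dens_add {n : Type*} [Fintype n] [DecidableEq n] (i i' : n) (hi : i ≠ i') :
    IsDensityMatrix (proj ((Real.sqrt 2 : ℂ)⁻¹ • (Pi.single i 1 + Pi.single i' 1 : n → ℂ))) := by
  apply dens_aux
  have := trace_two i i' hi 1 (by simp) (by norm_num)
  simpa using this

lemma dens_sub {n : Type*} [Fintype n] [DecidableEq n] (i i' : n) (hi : i ≠ i') :
    IsDensityMatrix (proj ((Real.sqrt 2 : ℂ)⁻¹ • (Pi.single i 1 - Pi.single i' 1 : n → ℂ))) := by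
  apply dens_aux
  have := trace_two i i' hi (-1) (by simp) (by norm_num)
  simpa [sub_eq_add_neg, neg_one_mul] using this

theorem stmt10 (p q : ℕ) (i i' : Fin p) (j j' : Fin q)
    (hi : i ≠ i') (hj : j ≠ j') :
    ((1/2 : ℂ) • proj ((Real.sqrt 2 : ℂ)⁻¹ •
        (Pi.single (i, j) 1 - Pi.single (i', j') 1 : Fin p × Fin q → ℂ)) +
     (1/2 : ℂ) • proj ((Real.sqrt 2 : ℂ)⁻¹ •
        (Pi.single (i, j') 1 - Pi.single (i', j) 1 : Fin p × Fin q → ℂ)) =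
     (1/2 : ℂ) • proj (fun x => ((Real.sqrt 2 : ℂ)⁻¹ •
          (Pi.single i 1 + Pi.single i' 1 : Fin p → ℂ)) x.1 *
        ((Real.sqrt 2 : ℂ)⁻¹ • (Pi.single j 1 - Pi.single j' 1 : Fin q → ℂ)) x.2) +
     (1/2 : ℂ) • proj (fun x => ((Real.sqrt 2 : ℂ)⁻¹ •
          (Pi.single i 1 - Pi.single i' 1 : Fin p → ℂ)) x.1 *
        ((Real.sqrt 2 : ℂ)⁻¹ • (Pi.single j 1 + Pi.single j' 1 : Fin q → ℂ)) x.2)) ∧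
    Separable
      ((1/2 : ℂ) • proj ((Real.sqrt 2 : ℂ)⁻¹ •
          (Pi.single (i, j) 1 - Pi.single (i', j') 1 : Fin p × Fin q → ℂ)) +
       (1/2 : ℂ) • proj ((Real.sqrt 2 : ℂ)⁻¹ •
          (Pi.single (i, j') 1 - Pi.single (i', j) 1 : Fin p × Fin q → ℂ))) := by
  set α : ℂ := ((Real.sqrt 2 : ℂ))⁻¹ with hα
  have hs : α * star α = 1/2 := by rw [star_alpha]; exact halfsq
  have e1 : (Pi.single (i, j) 1 - Pi.single (i', j') 1 : Fin p × Fin q → ℂ)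
      = fun x => (Pi.single i (1:ℂ) : Fin p → ℂ) x.1 * (Pi.single j (1:ℂ) : Fin q → ℂ) x.2
          - (Pi.single i' (1:ℂ) : Fin p → ℂ) x.1 * (Pi.single j' (1:ℂ) : Fin q → ℂ) x.2 := by
    funext x; simp [single_prod]
  have e2 : (Pi.single (i, j') 1 - Pi.single (i', j) 1 : Fin p × Fin q → ℂ)
      = fun x => (Pi.single i (1:ℂ) : Fin p → ℂ) x.1 * (Pi.single j' (1:ℂ) : Fin q → ℂ) x.2
          - (Pi.single i' (1:ℂ) : Fin p → ℂ) x.1 * (Pi.single j (1:ℂ) : Fin q → ℂ) x.2 := by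
    funext x; simp [single_prod]
  have r1 : (fun x : Fin p × Fin q => (α • (Pi.single i 1 + Pi.single i' 1 : Fin p → ℂ)) x.1 *
        (α • (Pi.single j 1 - Pi.single j' 1 : Fin q → ℂ)) x.2)
      = (α * α) • fun x : Fin p × Fin q =>
          ((Pi.single i (1:ℂ) : Fin p → ℂ) x.1 + (Pi.single i' (1:ℂ) : Fin p → ℂ) x.1) *
          ((Pi.single j (1:ℂ) : Fin q → ℂ) x.2 - (Pi.single j' (1:ℂ) : Fin q → ℂ) x.2) := by
    funext x; simp [Pi.smul_apply, smul_eq_mul]; ring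
  have r2 : (fun x : Fin p × Fin q => (α • (Pi.single i 1 - Pi.single i' 1 : Fin p → ℂ)) x.1 *
        (α • (Pi.single j 1 + Pi.single j' 1 : Fin q → ℂ)) x.2)
      = (α * α) • fun x : Fin p × Fin q =>
          ((Pi.single i (1:ℂ) : Fin p → ℂ) x.1 - (Pi.single i' (1:ℂ) : Fin p → ℂ) x.1) *
          ((Pi.single j (1:ℂ) : Fin q → ℂ) x.2 + (Pi.single j' (1:ℂ) : Fin q → ℂ) x.2) := by
    funext x; simp [Pi.smul_apply, smul_eq_mul]; ring
  have hs4 : (α * α) * star (α * α) = (4:ℂ)⁻¹ := by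
    rw [star_mul', star_alpha, ← hα, halfsq]; norm_num
  have heq : ((1/2 : ℂ) • proj (α •
        (Pi.single (i, j) 1 - Pi.single (i', j') 1 : Fin p × Fin q → ℂ)) +
     (1/2 : ℂ) • proj (α •
        (Pi.single (i, j') 1 - Pi.single (i', j) 1 : Fin p × Fin q → ℂ)) =
     (1/2 : ℂ) • proj (fun x => (α •
          (Pi.single i 1 + Pi.single i' 1 : Fin p → ℂ)) x.1 *
        (α • (Pi.single j 1 - Pi.single j' 1 : Fin q → ℂ)) x.2) +
     (1/2 : ℂ) • proj (fun x => (α •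
          (Pi.single i 1 - Pi.single i' 1 : Fin p → ℂ)) x.1 *
        (α • (Pi.single j 1 + Pi.single j' 1 : Fin q → ℂ)) x.2)) := by
    rw [e1, e2, r1, r2, proj_smul, proj_smul, proj_smul, proj_smul, hs, hs4]
    have hkey := key (Pi.single i (1:ℂ)) (Pi.single i' (1:ℂ))
      (Pi.single j (1:ℂ)) (Pi.single j' (1:ℂ))
    calc ((1:ℂ)/2) • (((1:ℂ)/2) • proj (fun x : Fin p × Fin q =>
            (Pi.single i (1:ℂ) : Fin p → ℂ) x.1 * (Pi.single j (1:ℂ) : Fin q → ℂ) x.2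
            - (Pi.single i' (1:ℂ) : Fin p → ℂ) x.1 * (Pi.single j' (1:ℂ) : Fin q → ℂ) x.2)) +
         ((1:ℂ)/2) • (((1:ℂ)/2) • proj (fun x : Fin p × Fin q =>
            (Pi.single i (1:ℂ) : Fin p → ℂ) x.1 * (Pi.single j' (1:ℂ) : Fin q → ℂ) x.2
            - (Pi.single i' (1:ℂ) : Fin p → ℂ) x.1 * (Pi.single j (1:ℂ) : Fin q → ℂ) x.2))
        = ((1:ℂ)/4) • (proj (fun x : Fin p × Fin q =>
            (Pi.single i (1:ℂ) : Fin p → ℂ) x.1 * (Pi.single j (1:ℂ) : Fin q → ℂ) x.2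
            - (Pi.single i' (1:ℂ) : Fin p → ℂ) x.1 * (Pi.single j' (1:ℂ) : Fin q → ℂ) x.2)
          + proj (fun x : Fin p × Fin q =>
            (Pi.single i (1:ℂ) : Fin p → ℂ) x.1 * (Pi.single j' (1:ℂ) : Fin q → ℂ) x.2
            - (Pi.single i' (1:ℂ) : Fin p → ℂ) x.1 * (Pi.single j (1:ℂ) : Fin q → ℂ) x.2)) := by
          module
      _ = _ := by rw [hkey]; module
  refine ⟨heq, ?_⟩
  refine ⟨2, ![1/2, 1/2],
    ![proj (α • (Pi.single i 1 + Pi.single i' 1 : Fin p → ℂ)),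
      proj (α • (Pi.single i 1 - Pi.single i' 1 : Fin p → ℂ))],
    ![proj (α • (Pi.single j 1 - Pi.single j' 1 : Fin q → ℂ)),
      proj (α • (Pi.single j 1 + Pi.single j' 1 : Fin q → ℂ))], ?_, ?_, ?_, ?_, ?_⟩
  · intro k; fin_cases k <;> norm_num
  · rw [Fin.sum_univ_two]; norm_num
  · intro k; fin_cases k
    · simpa using dens_add i i' hi
    · simpa using dens_sub i i' hi
  · intro k; fin_cases k
    · simpa using dens_sub j j' hj
    · simpa using dens_add j j' hj
  · rw [Fin.sum_univ_two, heq]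
    simp only [Matrix.cons_val_zero, Matrix.cons_val_one, Matrix.head_cons]
    rw [← proj_prod, ← proj_prod]
    norm_num
end
end

section
/- If G is a perfect entangling matching on vertices {(i,1),(i,2) : 1 ≤ i ≤ p} in which every edge joins a vertex with second label 1 to a vertex with second label 2 and different first labels, then G^{Γ_B} is also a perfect entangling matching; i.e., P_{p·2} = P^S_{p·2}. -/
open Matrix Kronecker
open scoped BigOperators Classical ComplexOrder

noncomputable section

theorem stmt13 (p : ℕ) (G : SimpleGraph (Fin p × Fin 2))
    (hpm : ∀ v, G.degree v = 1)
    (hent : ∀ x y : Fin p × Fin 2, G.Adj x y → x.1 ≠ y.1 ∧ x.2 ≠ y.2) :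
    (∀ v, (gptB G).degree v = 1) ∧
      (∀ x y : Fin p × Fin 2, (gptB G).Adj x y → x.1 ≠ y.1 ∧ x.2 ≠ y.2) := by
  have h2 : ∀ s t : Fin 2, t ≠ s → t = 1 - s := by decide
  have h2' : ∀ s t : Fin 2, t ≠ 1 - s → t = s := by decide
  constructor
  · intro v
    rw [← SimpleGraph.card_neighborFinset_eq_degree]
    rw [← hpm (v.1, 1 - v.2), ← SimpleGraph.card_neighborFinset_eq_degree]
    apply Finset.card_bij (fun y _ => (y.1, v.2))
    · intro y hy
      simp only [SimpleGraph.mem_neighborFinset] at hy ⊢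
      have hadj : G.Adj (v.1, y.2) (y.1, v.2) := hy
      have hne : y.2 ≠ v.2 := (hent _ _ hadj).2
      have hy2 : y.2 = 1 - v.2 := h2 _ _ hne
      rw [← hy2]
      exact hadj
    · intro a ha b hb hab
      simp only [SimpleGraph.mem_neighborFinset] at ha hb
      have ha2 : a.2 = 1 - v.2 := h2 _ _ (hent _ _ ha).2
      have hb2 : b.2 = 1 - v.2 := h2 _ _ (hent _ _ hb).2
      have h1 : a.1 = b.1 := (Prod.ext_iff.mp hab).1
      exact Prod.ext h1 (ha2.trans hb2.symm)
    · intro z hz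
      simp only [SimpleGraph.mem_neighborFinset] at hz
      have hz2 : z.2 = v.2 := h2' _ _ fun h => (hent _ _ hz).2 h.symm
      refine ⟨(z.1, 1 - v.2), ?_, ?_⟩
      · simp only [SimpleGraph.mem_neighborFinset]
        show G.Adj (v.1, 1 - v.2) (z.1, v.2)
        have hzeq : (z.1, v.2) = z := Prod.ext rfl hz2.symm
        rw [hzeq]; exact hz
      · exact Prod.ext rfl hz2.symm
  · intro x y hxy
    have := hent _ _ hxy
    exact ⟨fun h => this.1 (by simpa using h), fun h => this.2 (by simp [h])⟩
end
end
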